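/- If the null point location is x₀ = (1/ψ)·artanh((cosh(ψL) − 1)/(sinh(ψL) + k_b/(Eψ))), then the stress field σ(x) = E·αΔT·(cosh(ψ(x−x₀))/cosh(ψ(L−x₀)) − 1) + F·(Eψ·sinh(ψx) + k_b·cosh(ψx))/(A·(Eψ·sinh(ψL) + k_b·cosh(ψL))) and the displacement field u(x) = αΔT·sinh(ψ(x−x₀))/(ψ·cosh(ψ(L−x₀))) + F·(Eψ·cosh(ψx) + k_b·sinh(ψx))/(A·E·ψ·(Eψ·sinh(ψL) + k_b·cosh(ψL))) satisfy the pile-tip boundary condition σ(0) = k_b·u(0). -/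

import Mathlib

/-- Real inverse hyperbolic tangent. -/
noncomputable def artanh (y : ℝ) : ℝ := (1 / 2) * Real.log ((1 + y) / (1 - y))

lemma sinh_artanh (y : ℝ) (h1 : -1 < y) (h2 : y < 1) :
    Real.sinh (artanh y) = y * Real.cosh (artanh y) := by
  have hy1 : 0 < 1 + y := by linarith
  have hy2 : 0 < 1 - y := by linarith
  have hr : 0 < (1 + y) / (1 - y) := div_pos hy1 hy2
  set a := artanh y with ha
  have hs : Real.exp a * Real.exp a = (1 + y) / (1 - y) := by
    rw [← Real.exp_add]
    have : a + a = Real.log ((1 + y) / (1 - y)) := by rw [ha, artanh]; ring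
    rw [this, Real.exp_log hr]
  have hsp : 0 < Real.exp a := Real.exp_pos a
  have hs' : (1 - y) * (Real.exp a * Real.exp a) = 1 + y := by
    field_simp at hs; linarith [hs]
  rw [Real.sinh_eq, Real.cosh_eq, Real.exp_neg]
  field_simp
  ring_nf
  nlinarith [hs']

/-- With the null point located by the artanh formula, the stress and displacement
fields satisfy the pile-tip boundary condition `σ(0) = k_b · u(0)`. -/
theorem tip_boundary_condition
    (ψ E A L α ΔT F kb : ℝ)
    (hψ : 0 < ψ) (hE : 0 < E) (hA : 0 < A) (hL : 0 < L) (hkb : 0 ≤ kb) :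
    let x₀ : ℝ := (1 / ψ) *
      artanh ((Real.cosh (ψ * L) - 1) / (Real.sinh (ψ * L) + kb / (E * ψ)))
    let σ : ℝ → ℝ := fun x =>
      E * (α * ΔT) * (Real.cosh (ψ * (x - x₀)) / Real.cosh (ψ * (L - x₀)) - 1) +
      F * (E * ψ * Real.sinh (ψ * x) + kb * Real.cosh (ψ * x)) /
        (A * (E * ψ * Real.sinh (ψ * L) + kb * Real.cosh (ψ * L)))
    let u : ℝ → ℝ := fun x =>
      α * ΔT * Real.sinh (ψ * (x - x₀)) / (ψ * Real.cosh (ψ * (L - x₀))) +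
      F * (E * ψ * Real.cosh (ψ * x) + kb * Real.sinh (ψ * x)) /
        (A * E * ψ * (E * ψ * Real.sinh (ψ * L) + kb * Real.cosh (ψ * L)))
    σ 0 = kb * u 0 := by
  intro x₀ σ u
  have hψL : 0 < ψ * L := mul_pos hψ hL
  have hS : 0 < Real.sinh (ψ * L) := Real.sinh_pos_iff.mpr hψL
  have hC1 : 1 ≤ Real.cosh (ψ * L) := Real.one_le_cosh (ψ * L)
  have hknn : 0 ≤ kb / (E * ψ) := div_nonneg hkb (le_of_lt (mul_pos hE hψ))
  set y : ℝ := (Real.cosh (ψ * L) - 1) / (Real.sinh (ψ * L) + kb / (E * ψ)) with hy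
  have hden : 0 < Real.sinh (ψ * L) + kb / (E * ψ) := by linarith
  have hy0 : 0 ≤ y := div_nonneg (by linarith) (le_of_lt hden)
  have hy1 : y < 1 := by
    rw [hy, div_lt_one hden]
    have := Real.cosh_sub_sinh (ψ * L)
    have hexp : Real.exp (-(ψ * L)) < 1 := Real.exp_lt_one_iff.mpr (by linarith)
    linarith
  set a : ℝ := artanh y with ha
  have htanh : Real.sinh a = y * Real.cosh a := sinh_artanh y (by linarith) hy1
  have hx₀ : x₀ = (1 / ψ) * a := rfl
  have hψx₀ : ψ * x₀ = a := by
    rw [hx₀]; field_simp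
  -- key identity
  have hy' : y * (E * ψ * Real.sinh (ψ * L) + kb) = E * ψ * (Real.cosh (ψ * L) - 1) := by
    have h0 : y * (Real.sinh (ψ * L) + kb / (E * ψ)) = Real.cosh (ψ * L) - 1 := by
      rw [hy]; field_simp
    have hEψ : E * ψ ≠ 0 := ne_of_gt (mul_pos hE hψ)
    field_simp at h0
    nlinarith [h0]
  have hkey : E * ψ * Real.cosh a + kb * Real.sinh a
      = E * ψ * Real.cosh (ψ * L - a) := by
    rw [Real.cosh_sub]
    linear_combination Real.cosh a * hy' + (kb + E * ψ * Real.sinh (ψ * L)) * htanh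
  -- positivity of denominators
  have hCa : 0 < Real.cosh (ψ * L - a) := Real.cosh_pos _
  have hD : 0 < E * ψ * Real.sinh (ψ * L) + kb * Real.cosh (ψ * L) := by
    have := Real.cosh_pos (x := ψ * L)
    nlinarith [mul_pos (mul_pos hE hψ) hS]
  show σ 0 = kb * u 0
  simp only [σ, u, zero_sub, mul_zero, mul_neg, hψx₀, Real.sinh_neg, Real.cosh_neg,
    Real.sinh_zero, Real.cosh_zero, mul_sub, sub_eq_iff_eq_add]
  

  field_simp
  linear_combination (E * α * ΔT * A *
    (E * ψ * Real.sinh (ψ * L) + kb * Real.cosh (ψ * L))) * hkey
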